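/- Let p be an odd prime, u ∈ 𝔽̄_p× a nonzero constant, c₁ ∈ 𝔽̄_p[t] a non-constant square, and γ = −c₁ − u√c₁. Let φ = (x−γ)² − c₁ with adjusted post-critical orbit (cₙ). Then for every n ≥ 3, cₙ/c₁ = √c₁·(√c₁·gₙ + 2u³) + u² − 1 for some gₙ ∈ 𝔽̄_p[t]. -/
import Mathlib


open Polynomial

/-- Let `p` be an odd prime, `u ∈ 𝔽̄_p×`, `c₁ ∈ 𝔽̄_p[t]` a non-constant square
with fixed polynomial square root `r` (`r² = c₁`), and `γ = -c₁ - u·r`.  For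
`φ = (x - γ)² - c₁` with adjusted post-critical orbit `(cₙ)`, for every `n ≥ 3` one has
`cₙ / c₁ = r·(r·gₙ + 2u³) + (u² - 1)` for some `gₙ ∈ 𝔽̄_p[t]` (stated multiplied through
by `c₁`). -/
theorem stmt_15 (p : ℕ) [Fact p.Prime] (hodd : p ≠ 2)
    (u : AlgebraicClosure (ZMod p)) (hu : u ≠ 0)
    (r c₁ : Polynomial (AlgebraicClosure (ZMod p)))
    (hr : r ^ 2 = c₁) (hconst : 0 < c₁.natDegree)
    (γ : Polynomial (AlgebraicClosure (ZMod p)))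
    (hγ : γ = -c₁ - C u * r)
    (c : ℕ → Polynomial (AlgebraicClosure (ZMod p)))
    (hc1 : c 1 = c₁)
    (hcn : ∀ n, 2 ≤ n → c n = (fun x => (x - γ) ^ 2 - c₁)^[n] γ) :
    ∀ n, 3 ≤ n → ∃ g : Polynomial (AlgebraicClosure (ZMod p)),
      c n = c₁ * (r * (r * g + C (2 * u ^ 3)) + C (u ^ 2 - 1)) := by
  intro n hn
  induction n, hn using Nat.le_induction with
  | base =>
    refine ⟨C (u ^ 4), ?_⟩
    rw [hcn 3 (by norm_num)]
    simp only [Function.iterate_succ, Function.iterate_zero, Function.comp_apply, id_eq]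
    subst hγ; subst hr
    simp only [map_mul, map_pow, map_sub, map_one, map_ofNat]
    ring
  | succ n hn ih =>
    obtain ⟨g, hg⟩ := ih
    refine ⟨(r ^ 2 * g + C (2 * u ^ 3) * r + C (u ^ 2)) ^ 2 + C (2 * u) * r * g
      + C (4 * u ^ 4), ?_⟩
    rw [hcn (n + 1) (by omega), Function.iterate_succ_apply', ← hcn n (by omega), hg]
    subst hγ; subst hr
    simp only [map_mul, map_pow, map_sub, map_one, map_ofNat, map_add]
    ring
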